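/- arXiv:2301.04142 — 2 statements merged into one kernel-verified Lean document; each statement's English description precedes it below -/
import Mathlib

section
/- (Appendix B, Corollary: the region's conventional CFL limit is at most every single-cell generalized CFL limit.) For the concrete 3-D FDTD-Q region, set Σc := (8/(ℏ*Δx*Δy*Δz)) • Hc for each cell c. Then for every cell c = (k,j,i) ∈ Fin nz × Fin ny × Fin nx and every eigenvalue ν ∈ spectrum ℝ Σc, |ν| ≤ (2*ℏ/m) * (1/Δx^2 + 1/Δy^2 + 1/Δz^2) + (1/ℏ) * (max over p ∈ 𝒩 of |U p|). Equivalently, Δt_CFL := 2/((2*ℏ/m)*(1/Δx^2+1/Δy^2+1/Δz^2) + (max over p ∈ 𝒩 of |U p|)/ℏ) is at most min over cells c of 2/ρ(Σc). -/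
open Matrix Kronecker

noncomputable section

abbrev Node (nx ny nz : ℕ) := Fin (nz+1) × Fin (ny+1) × Fin (nx+1)

/-- Triple Kronecker product with indices identified with `α × β × γ`. -/
def kron3 {α β γ : Type*} (A : Matrix α α ℝ) (B : Matrix β β ℝ) (C : Matrix γ γ ℝ) :
    Matrix (α × β × γ) (α × β × γ) ℝ :=
  Matrix.reindex (Equiv.prodAssoc α β γ) (Equiv.prodAssoc α β γ) (A ⊗ₖ B ⊗ₖ C)

/-- 1-D finite-difference matrix `W p`: `-1` at `j = castSucc i`, `+1` at `j = succ i`. -/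
def Wmat (p : ℕ) : Matrix (Fin p) (Fin (p+1)) ℝ :=
  Matrix.of fun i j => if j = Fin.castSucc i then (-1 : ℝ) else if j = Fin.succ i then 1 else 0

/-- 1-D stiffness matrix `A p = (W p)ᵀ * W p`. -/
def Amat (p : ℕ) : Matrix (Fin (p+1)) (Fin (p+1)) ℝ := (Wmat p)ᵀ * Wmat p

/-- Diagonal matrix with first and last entries `1/2`, all others `1`. -/
def Itl (p : ℕ) : Matrix (Fin (p+1)) (Fin (p+1)) ℝ :=
  Matrix.diagonal (fun i => if i = 0 ∨ i = Fin.last p then (1:ℝ)/2 else 1)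

/-- Secondary-cell volume matrix `V''`. -/
def Vsec (nx ny nz : ℕ) (Δx Δy Δz : ℝ) : Matrix (Node nx ny nz) (Node nx ny nz) ℝ :=
  Matrix.diagonal (fun p =>
    Δx * Δy * Δz * Itl nz p.1 p.1 * Itl ny p.2.1 p.2.1 * Itl nx p.2.2 p.2.2)

/-- The FDTD-Q Hamiltonian matrix `H`. -/
def Hmat (nx ny nz : ℕ) (ℏ m Δx Δy Δz : ℝ) (U : Node nx ny nz → ℝ) :
    Matrix (Node nx ny nz) (Node nx ny nz) ℝ :=
  (ℏ^2/(2*m)) • ((Δy*Δz/Δx) • kron3 (Itl nz) (Itl ny) (Amat nx)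
    + (Δx*Δz/Δy) • kron3 (Itl nz) (Amat ny) (Itl nx)
    + (Δx*Δy/Δz) • kron3 (Amat nz) (Itl ny) (Itl nx))
  + Vsec nx ny nz Δx Δy Δz * Matrix.diagonal U

/-- Diagonal matrix of reciprocal square roots of the diagonal of `V''`. -/
def Dmat (nx ny nz : ℕ) (Δx Δy Δz : ℝ) : Matrix (Node nx ny nz) (Node nx ny nz) ℝ :=
  Matrix.diagonal (fun p => 1 / Real.sqrt (Vsec nx ny nz Δx Δy Δz p p))

/-- The scaled Hamiltonian `Σ = (1/ℏ) • (D * H * D)`. -/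
def Sgm (nx ny nz : ℕ) (ℏ m Δx Δy Δz : ℝ) (U : Node nx ny nz → ℝ) :
    Matrix (Node nx ny nz) (Node nx ny nz) ℝ :=
  (1/ℏ) • (Dmat nx ny nz Δx Δy Δz * Hmat nx ny nz ℏ m Δx Δy Δz U * Dmat nx ny nz Δx Δy Δz)


/-- The corner node index `k + κ` inside `Fin (p+1)`. -/
def cornerIdx {p : ℕ} (k : Fin p) (κ : Fin 2) : Fin (p+1) :=
  ⟨k.val + κ.val, by have h1 := k.isLt; have h2 := κ.isLt; omega⟩

/-- Restriction of a nodal function to the 8 corners of the primary cell `c`. -/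
def restr {nx ny nz : ℕ} (c : Fin nz × Fin ny × Fin nx) (ψ : Node nx ny nz → ℝ) :
    Fin 2 × Fin 2 × Fin 2 → ℝ :=
  fun q => ψ (cornerIdx c.1 q.1, cornerIdx c.2.1 q.2.1, cornerIdx c.2.2 q.2.2)

/-- The 1-D single-cell stiffness matrix `Ŵ = W₁ᵀW₁`. -/
def What : Matrix (Fin 2) (Fin 2) ℝ := !![1, -1; -1, 1]

/-- The single-cell FDTD-Q Hamiltonian of the primary cell `c`. -/
def Hcell (nx ny nz : ℕ) (ℏ m Δx Δy Δz : ℝ) (U : Node nx ny nz → ℝ)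
    (c : Fin nz × Fin ny × Fin nx) :
    Matrix (Fin 2 × Fin 2 × Fin 2) (Fin 2 × Fin 2 × Fin 2) ℝ :=
  (ℏ^2/(2*m)) • ((Δy*Δz/(4*Δx)) • kron3 (1 : Matrix (Fin 2) (Fin 2) ℝ)
        (1 : Matrix (Fin 2) (Fin 2) ℝ) What
    + (Δx*Δz/(4*Δy)) • kron3 (1 : Matrix (Fin 2) (Fin 2) ℝ) What
        (1 : Matrix (Fin 2) (Fin 2) ℝ)
    + (Δx*Δy/(4*Δz)) • kron3 What (1 : Matrix (Fin 2) (Fin 2) ℝ)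
        (1 : Matrix (Fin 2) (Fin 2) ℝ))
  + (Δx*Δy*Δz/8) • Matrix.diagonal (restr c U)

/-- The single-cell volume matrix. -/
def Vcell (Δx Δy Δz : ℝ) :
    Matrix (Fin 2 × Fin 2 × Fin 2) (Fin 2 × Fin 2 × Fin 2) ℝ :=
  (Δx*Δy*Δz/8) • (1 : Matrix (Fin 2 × Fin 2 × Fin 2) (Fin 2 × Fin 2 × Fin 2) ℝ)


attribute [local instance] Matrix.linftyOpNormedAddCommGroup Matrix.linftyOpNormedRing
  Matrix.linftyOpNormedAlgebra Matrix.linftyOpNormedSpace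

lemma rowsum_le {m n : Type*} [Fintype m] [Fintype n] [Nonempty m] (A : Matrix m n ℝ) {r : ℝ}
    (h : ∀ i, ∑ j, ‖A i j‖ ≤ r) : ‖A‖ ≤ r := by
  have hr : 0 ≤ r := le_trans (by positivity) (h (Classical.arbitrary m))
  rw [Matrix.linfty_opNorm_def, ← Real.coe_toNNReal r hr, NNReal.coe_le_coe]
  refine Finset.sup_le fun i _ => ?_
  rw [← NNReal.coe_le_coe, NNReal.coe_sum, Real.coe_toNNReal r hr]
  simpa using h i

lemma kron3_apply' {α β γ : Type*} (A : Matrix α α ℝ) (B : Matrix β β ℝ) (C : Matrix γ γ ℝ)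
    (i j : α × β × γ) : kron3 A B C i j = A i.1 j.1 * B i.2.1 j.2.1 * C i.2.2 j.2.2 := by
  simp [kron3, Matrix.kroneckerMap_apply, Equiv.prodAssoc, mul_assoc]

lemma kron3_rowsum' (A B C : Matrix (Fin 2) (Fin 2) ℝ) (i : Fin 2 × Fin 2 × Fin 2) :
    ∑ j, ‖kron3 A B C i j‖ =
      (∑ a, ‖A i.1 a‖) * (∑ b, ‖B i.2.1 b‖) * (∑ c, ‖C i.2.2 c‖) := by
  rw [Fintype.sum_prod_type]
  simp only [Fintype.sum_prod_type, kron3_apply', abs_mul, Real.norm_eq_abs]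
  simp only [Fin.sum_univ_two]; ring

lemma one_rowsum' (i : Fin 2) : ∑ a, ‖(1 : Matrix (Fin 2) (Fin 2) ℝ) i a‖ = 1 := by
  fin_cases i <;> simp [Fin.sum_univ_two, Matrix.one_apply]

lemma What_rowsum' (i : Fin 2) : ∑ a, ‖What i a‖ = 2 := by
  fin_cases i <;> norm_num [Fin.sum_univ_two, What]

/-- Appendix B of the paper (corollary): every eigenvalue of every scaled single-cell
Hamiltonian `Σc` is bounded in absolute value by the reciprocal of the region's
conventional CFL limit (times 2); i.e. the region's conventional CFL limit is at most
every single-cell generalized CFL limit. -/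
theorem fdtdq_region_CFL_le_cell_generalized_CFL
    (nx ny nz : ℕ) (hnx : 0 < nx) (hny : 0 < ny) (hnz : 0 < nz)
    (ℏ m Δx Δy Δz : ℝ) (hℏ : 0 < ℏ) (hm : 0 < m)
    (hΔx : 0 < Δx) (hΔy : 0 < Δy) (hΔz : 0 < Δz)
    (U : Node nx ny nz → ℝ) :
    ∀ c : Fin nz × Fin ny × Fin nx,
      ∀ ν ∈ spectrum ℝ ((8/(ℏ*Δx*Δy*Δz)) • Hcell nx ny nz ℏ m Δx Δy Δz U c),
        |ν| ≤ (2*ℏ/m) * (1/Δx^2 + 1/Δy^2 + 1/Δz^2)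
          + (1/ℏ) * (Finset.univ.sup' Finset.univ_nonempty
              (fun p : Node nx ny nz => |U p|)) := by
  intro c ν hν
  set M := Finset.univ.sup' Finset.univ_nonempty (fun p : Node nx ny nz => |U p|) with hMdef
  have hM0 : 0 ≤ M :=
    le_trans (abs_nonneg (U (Classical.arbitrary _)))
      (Finset.le_sup' (fun p : Node nx ny nz => |U p|) (Finset.mem_univ _))
  have hK1 : ‖kron3 (1 : Matrix (Fin 2) (Fin 2) ℝ) (1 : Matrix (Fin 2) (Fin 2) ℝ) What‖ ≤ 2 := by
    refine rowsum_le _ fun i => ?_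
    rw [kron3_rowsum', one_rowsum', one_rowsum', What_rowsum']; norm_num
  have hK2 : ‖kron3 (1 : Matrix (Fin 2) (Fin 2) ℝ) What (1 : Matrix (Fin 2) (Fin 2) ℝ)‖ ≤ 2 := by
    refine rowsum_le _ fun i => ?_
    rw [kron3_rowsum', one_rowsum', one_rowsum', What_rowsum']; norm_num
  have hK3 : ‖kron3 What (1 : Matrix (Fin 2) (Fin 2) ℝ) (1 : Matrix (Fin 2) (Fin 2) ℝ)‖ ≤ 2 := by
    refine rowsum_le _ fun i => ?_
    rw [kron3_rowsum', one_rowsum', one_rowsum', What_rowsum']; norm_num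
  have hdiag : ‖Matrix.diagonal (restr c U)‖ ≤ M := by
    rw [Matrix.linfty_opNorm_diagonal]
    refine (pi_norm_le_iff_of_nonneg hM0).mpr fun q => ?_
    exact Finset.le_sup' (fun p : Node nx ny nz => |U p|) (Finset.mem_univ _)
  have hH : ‖Hcell nx ny nz ℏ m Δx Δy Δz U c‖ ≤
      (ℏ^2/(2*m)) * ((Δy*Δz/(4*Δx))*2 + (Δx*Δz/(4*Δy))*2 + (Δx*Δy/(4*Δz))*2)
        + (Δx*Δy*Δz/8) * M := by
    rw [Hcell]
    refine le_trans (norm_add_le _ _) (add_le_add ?_ ?_)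
    · rw [norm_smul, Real.norm_eq_abs, abs_of_nonneg (by positivity)]
      refine mul_le_mul_of_nonneg_left ?_ (by positivity)
      have e1 : ‖(Δy*Δz/(4*Δx)) • kron3 (1 : Matrix (Fin 2) (Fin 2) ℝ)
          (1 : Matrix (Fin 2) (Fin 2) ℝ) What‖ ≤ (Δy*Δz/(4*Δx))*2 := by
        rw [norm_smul, Real.norm_eq_abs, abs_of_nonneg (by positivity)]
        exact mul_le_mul_of_nonneg_left hK1 (by positivity)
      have e2 : ‖(Δx*Δz/(4*Δy)) • kron3 (1 : Matrix (Fin 2) (Fin 2) ℝ) What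
          (1 : Matrix (Fin 2) (Fin 2) ℝ)‖ ≤ (Δx*Δz/(4*Δy))*2 := by
        rw [norm_smul, Real.norm_eq_abs, abs_of_nonneg (by positivity)]
        exact mul_le_mul_of_nonneg_left hK2 (by positivity)
      have e3 : ‖(Δx*Δy/(4*Δz)) • kron3 What (1 : Matrix (Fin 2) (Fin 2) ℝ)
          (1 : Matrix (Fin 2) (Fin 2) ℝ)‖ ≤ (Δx*Δy/(4*Δz))*2 := by
        rw [norm_smul, Real.norm_eq_abs, abs_of_nonneg (by positivity)]
        exact mul_le_mul_of_nonneg_left hK3 (by positivity)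
      calc ‖_ + _ + _‖ ≤ _ := norm_add_le _ _
        _ ≤ _ := add_le_add (norm_add_le _ _) le_rfl
        _ ≤ _ := by exact add_le_add (add_le_add e1 e2) e3
    · rw [norm_smul, Real.norm_eq_abs, abs_of_nonneg (by positivity)]
      exact mul_le_mul_of_nonneg_left hdiag (by positivity)
  have key : |ν| ≤ ‖(8/(ℏ*Δx*Δy*Δz)) • Hcell nx ny nz ℏ m Δx Δy Δz U c‖ := by
    simpa [Real.norm_eq_abs] using spectrum.norm_le_norm_of_mem hν
  have hc0 : (0:ℝ) < 8/(ℏ*Δx*Δy*Δz) := by positivity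
  calc |ν| ≤ ‖(8/(ℏ*Δx*Δy*Δz)) • Hcell nx ny nz ℏ m Δx Δy Δz U c‖ := key
    _ = (8/(ℏ*Δx*Δy*Δz)) * ‖Hcell nx ny nz ℏ m Δx Δy Δz U c‖ := by
        rw [norm_smul, Real.norm_eq_abs, abs_of_pos hc0]
    _ ≤ (8/(ℏ*Δx*Δy*Δz)) * ((ℏ^2/(2*m)) * ((Δy*Δz/(4*Δx))*2 + (Δx*Δz/(4*Δy))*2
          + (Δx*Δy/(4*Δz))*2) + (Δx*Δy*Δz/8) * M) :=
        mul_le_mul_of_nonneg_left hH hc0.le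
    _ = (2*ℏ/m) * (1/Δx^2 + 1/Δy^2 + 1/Δz^2) + (1/ℏ) * M := by
        field_simp
        ring


end
end

section
/- (Consequence of Theorem 2 and Lemma 1: the conventional CFL condition guarantees positive definiteness of the probability matrix.) For the concrete 3-D FDTD-Q region, let Δt be a real number with 0 < Δt < 2/((2*ℏ/m) * (1/Δx^2 + 1/Δy^2 + 1/Δz^2) + (1/ℏ) * (max over p ∈ 𝒩 of |U p|)). Then the block matrix 𝒫 := Matrix.fromBlocks V'' (-(Δt/(2*ℏ)) • H) (-(Δt/(2*ℏ)) • H) V'', indexed by 𝒩 ⊕ 𝒩, is positive definite. -/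
open Matrix Kronecker

noncomputable section

/-! ### Auxiliary lemmas -/

section Aux

set_option linter.unusedSectionVars false

/-- Cauchy–Schwarz for real dot products. -/
lemma aux_dp_cs {n : Type*} [Fintype n] (u v : n → ℝ) :
    u ⬝ᵥ v ≤ Real.sqrt (u ⬝ᵥ u) * Real.sqrt (v ⬝ᵥ v) := by
  have h := Finset.sum_mul_sq_le_sq_mul_sq Finset.univ u v
  have hu : u ⬝ᵥ u = ∑ i, u i ^ 2 := by simp [dotProduct, sq]
  have hv : v ⬝ᵥ v = ∑ i, v i ^ 2 := by simp [dotProduct, sq]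
  have h2 : (u ⬝ᵥ v) ^ 2 ≤ (u ⬝ᵥ u) * (v ⬝ᵥ v) := by
    rw [hu, hv]; simpa [dotProduct] using h
  calc u ⬝ᵥ v ≤ |u ⬝ᵥ v| := le_abs_self _
    _ = Real.sqrt ((u ⬝ᵥ v) ^ 2) := (Real.sqrt_sq_eq_abs _).symm
    _ ≤ Real.sqrt ((u ⬝ᵥ u) * (v ⬝ᵥ v)) := Real.sqrt_le_sqrt h2
    _ = _ := Real.sqrt_mul (by rw [hu]; positivity) _

lemma aux_psd_exists {n : Type*} [Fintype n] {M : Matrix n n ℝ} (hM : M.PosSemidef) :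
    ∃ B : Matrix n n ℝ, M = Bᴴ * B := by
  classical
  open scoped MatrixOrder in
  obtain ⟨B, rfl⟩ := CStarAlgebra.nonneg_iff_eq_star_mul_self.mp hM.nonneg
  exact ⟨B, rfl⟩

/-- Cauchy–Schwarz for real positive-semidefinite matrices. -/
lemma aux_psd_cs {n : Type*} [Fintype n] {M : Matrix n n ℝ} (hM : M.PosSemidef) (x y : n → ℝ) :
    x ⬝ᵥ M *ᵥ y ≤ Real.sqrt (x ⬝ᵥ M *ᵥ x) * Real.sqrt (y ⬝ᵥ M *ᵥ y) := by
  obtain ⟨B, rfl⟩ := aux_psd_exists hM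
  have key : ∀ a b : n → ℝ, a ⬝ᵥ (Bᴴ * B) *ᵥ b = (B *ᵥ a) ⬝ᵥ (B *ᵥ b) := by
    intro a b
    rw [← Matrix.mulVec_mulVec, Matrix.dotProduct_mulVec,
      Matrix.conjTranspose_eq_transpose_of_trivial, Matrix.vecMul_transpose]
  rw [key, key, key]; exact aux_dp_cs _ _

lemma aux_psd_quad_nonneg {n : Type*} [Fintype n] {M : Matrix n n ℝ} (hM : M.PosSemidef)
    (x : n → ℝ) : 0 ≤ x ⬝ᵥ M *ᵥ x := by
  simpa using hM.dotProduct_mulVec_nonneg x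

lemma Wmat_mulVec (p : ℕ) (x : Fin (p+1) → ℝ) (i : Fin p) :
    (Wmat p *ᵥ x) i = x i.succ - x i.castSucc := by
  have hne : (Fin.succ i) ≠ (Fin.castSucc i) := (Fin.castSucc_lt_succ (i := i)).ne'
  have key : ∀ j : Fin (p+1),
      (Wmat p) i j * x j
        = (if j = Fin.succ i then x j else 0) - (if j = Fin.castSucc i then x j else 0) := by
    intro j
    by_cases h1 : j = Fin.castSucc i <;> by_cases h2 : j = Fin.succ i <;>
      simp_all [Wmat] <;> ring
  simp only [mulVec, dotProduct, key, Finset.sum_sub_distrib,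
    Finset.sum_ite_eq' Finset.univ, Finset.mem_univ, if_true]

lemma Amat_quad (p : ℕ) (x : Fin (p+1) → ℝ) :
    x ⬝ᵥ Amat p *ᵥ x = ∑ i : Fin p, (x i.succ - x i.castSucc) ^ 2 := by
  have h : x ⬝ᵥ Amat p *ᵥ x = (Wmat p *ᵥ x) ⬝ᵥ (Wmat p *ᵥ x) := by
    rw [Amat, ← Matrix.mulVec_mulVec, Matrix.dotProduct_mulVec, Matrix.vecMul_transpose]
  rw [h]
  simp [dotProduct, Wmat_mulVec, sq]

lemma Itl_quad (p : ℕ) (x : Fin (p+1) → ℝ) :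
    x ⬝ᵥ Itl p *ᵥ x = ∑ j, (if j = 0 ∨ j = Fin.last p then (1:ℝ)/2 else 1) * x j ^ 2 := by
  simp only [Itl, dotProduct, mulVec_diagonal]
  exact Finset.sum_congr rfl fun j _ => by ring

lemma Amat_le_Itl (p : ℕ) (hp : 0 < p) (x : Fin (p+1) → ℝ) :
    x ⬝ᵥ Amat p *ᵥ x ≤ 4 * (x ⬝ᵥ Itl p *ᵥ x) := by
  have h0l : (0 : Fin (p+1)) ≠ Fin.last p := by
    simp [Fin.ext_iff, Fin.last]; omega
  rw [Amat_quad, Itl_quad]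
  have hsum : ∑ j, (if j = 0 ∨ j = Fin.last p then (1:ℝ)/2 else 1) * x j ^ 2
      = (∑ j, x j ^ 2) - (1/2) * x 0 ^ 2 - (1/2) * x (Fin.last p) ^ 2 := by
    have key : ∀ j : Fin (p+1), (if j = 0 ∨ j = Fin.last p then (1:ℝ)/2 else 1) * x j ^ 2
        = x j ^ 2 - (1/2) * (if j = 0 then x j ^ 2 else 0)
          - (1/2) * (if j = Fin.last p then x j ^ 2 else 0) := by
      intro j
      by_cases h1 : j = 0 <;> by_cases h2 : j = Fin.last p <;> simp_all <;> ring
    simp only [key, Finset.sum_sub_distrib, ← Finset.mul_sum,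
      Finset.sum_ite_eq' Finset.univ, Finset.mem_univ, if_true]
  have hsucc : ∑ j, x j ^ 2 = x 0 ^ 2 + ∑ i : Fin p, x i.succ ^ 2 := Fin.sum_univ_succ _
  have hcast : ∑ j, x j ^ 2 = (∑ i : Fin p, x i.castSucc ^ 2) + x (Fin.last p) ^ 2 :=
    Fin.sum_univ_castSucc _
  calc ∑ i : Fin p, (x i.succ - x i.castSucc) ^ 2
      ≤ ∑ i : Fin p, (2 * x i.succ ^ 2 + 2 * x i.castSucc ^ 2) :=
        Finset.sum_le_sum fun i _ => by nlinarith [sq_nonneg (x i.succ + x i.castSucc)]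
    _ = 2 * (∑ i : Fin p, x i.succ ^ 2) + 2 * (∑ i : Fin p, x i.castSucc ^ 2) := by
        rw [Finset.sum_add_distrib, Finset.mul_sum, Finset.mul_sum]
    _ ≤ _ := by rw [hsum]; linarith [hsucc, hcast]

lemma Amat_posSemidef (p : ℕ) : (Amat p).PosSemidef := by
  have h : Amat p = (Wmat p)ᴴ * Wmat p := by
    rw [Matrix.conjTranspose_eq_transpose_of_trivial]; rfl
  rw [h]; exact Matrix.posSemidef_conjTranspose_mul_self _

lemma Itl_posSemidef (p : ℕ) : (Itl p).PosSemidef := by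
  apply Matrix.posSemidef_diagonal_iff.mpr
  intro i; by_cases h : i = 0 ∨ i = Fin.last p <;> simp [h] <;> norm_num

lemma Amat_transpose (p : ℕ) : (Amat p)ᵀ = Amat p := by
  rw [Amat, Matrix.transpose_mul, Matrix.transpose_transpose]

lemma Itl_transpose (p : ℕ) : (Itl p)ᵀ = Itl p := Matrix.diagonal_transpose _

variable {α β γ : Type*} [Fintype α] [Fintype β] [Fintype γ]
  [DecidableEq α] [DecidableEq β] [DecidableEq γ]

lemma kron3_apply (A : Matrix α α ℝ) (B : Matrix β β ℝ) (C : Matrix γ γ ℝ)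
    (p q : α × β × γ) :
    kron3 A B C p q = A p.1 q.1 * B p.2.1 q.2.1 * C p.2.2 q.2.2 := rfl

lemma kronecker_posSemidef {A : Matrix α α ℝ} {B : Matrix β β ℝ}
    (hA : A.PosSemidef) (hB : B.PosSemidef) : (A ⊗ₖ B).PosSemidef := by
  obtain ⟨A', rfl⟩ := aux_psd_exists hA
  obtain ⟨B', rfl⟩ := aux_psd_exists hB
  have ht : (A' ⊗ₖ B')ᴴ = A'ᴴ ⊗ₖ B'ᴴ := by
    simp only [Matrix.conjTranspose_eq_transpose_of_trivial]
    exact (Matrix.kroneckerMap_transpose _ _ _).symm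
  rw [show (A'ᴴ * A') ⊗ₖ (B'ᴴ * B') = (A' ⊗ₖ B')ᴴ * (A' ⊗ₖ B') from by
    rw [Matrix.mul_kronecker_mul, ← ht]]
  exact Matrix.posSemidef_conjTranspose_mul_self _

lemma kron3_posSemidef {A : Matrix α α ℝ} {B : Matrix β β ℝ} {C : Matrix γ γ ℝ}
    (hA : A.PosSemidef) (hB : B.PosSemidef) (hC : C.PosSemidef) : (kron3 A B C).PosSemidef := by
  unfold kron3
  rw [Matrix.reindex_apply]
  exact (kronecker_posSemidef (kronecker_posSemidef hA hB) hC).submatrix _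

lemma kron3_sub_smul_right (A : Matrix α α ℝ) (B : Matrix β β ℝ) (C C' : Matrix γ γ ℝ) (r : ℝ) :
    kron3 A B (r • C - C') = r • kron3 A B C - kron3 A B C' := by
  ext p q
  simp only [Matrix.sub_apply, Matrix.smul_apply, kron3_apply, smul_eq_mul]
  ring

lemma kron3_sub_smul_mid (A : Matrix α α ℝ) (B B' : Matrix β β ℝ) (C : Matrix γ γ ℝ) (r : ℝ) :
    kron3 A (r • B - B') C = r • kron3 A B C - kron3 A B' C := by
  ext p q
  simp only [Matrix.sub_apply, Matrix.smul_apply, kron3_apply, smul_eq_mul]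
  ring

lemma kron3_sub_smul_left (A A' : Matrix α α ℝ) (B : Matrix β β ℝ) (C : Matrix γ γ ℝ) (r : ℝ) :
    kron3 (r • A - A') B C = r • kron3 A B C - kron3 A' B C := by
  ext p q
  simp only [Matrix.sub_apply, Matrix.smul_apply, kron3_apply, smul_eq_mul]
  ring

lemma kron3_transpose (A : Matrix α α ℝ) (B : Matrix β β ℝ) (C : Matrix γ γ ℝ) :
    (kron3 A B C)ᵀ = kron3 Aᵀ Bᵀ Cᵀ := by
  ext p q
  rfl

/-- `4•Ĩ - A` is positive semidefinite (for `p > 0`). -/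
lemma four_Itl_sub_Amat_posSemidef (p : ℕ) (hp : 0 < p) :
    ((4:ℝ) • Itl p - Amat p).PosSemidef := by
  refine Matrix.PosSemidef.of_dotProduct_mulVec_nonneg ?_ ?_
  · show ((4:ℝ) • Itl p - Amat p)ᴴ = _
    rw [Matrix.conjTranspose_eq_transpose_of_trivial, Matrix.transpose_sub,
      Matrix.transpose_smul, Itl_transpose, Amat_transpose]
  · intro x
    have h := Amat_le_Itl p hp x
    have hx : star x = x := by funext i; exact star_trivial _
    rw [hx, Matrix.sub_mulVec, Matrix.smul_mulVec, dotProduct_sub, dotProduct_smul]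
    simp only [smul_eq_mul]
    linarith

end Aux

section Mid

set_option linter.unusedSectionVars false

variable (nx ny nz : ℕ)

lemma Vsec_eq_smul_kron3 (Δx Δy Δz : ℝ) :
    Vsec nx ny nz Δx Δy Δz = (Δx*Δy*Δz) • kron3 (Itl nz) (Itl ny) (Itl nx) := by
  ext ⟨k, j, i⟩ ⟨k', j', i'⟩
  simp only [Vsec, Matrix.smul_apply, kron3_apply, smul_eq_mul, Itl,
    Matrix.diagonal_apply, Prod.mk.injEq]
  by_cases hk : k = k' <;> by_cases hj : j = j' <;> by_cases hi : i = i' <;>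
    simp_all <;> ring

/-- quadratic-form comparison in the x-direction -/
lemma kron3_x_le (hnx : 0 < nx) (x : Node nx ny nz → ℝ) :
    x ⬝ᵥ kron3 (Itl nz) (Itl ny) (Amat nx) *ᵥ x
      ≤ 4 * (x ⬝ᵥ kron3 (Itl nz) (Itl ny) (Itl nx) *ᵥ x) := by
  have hpsd := kron3_posSemidef (Itl_posSemidef nz) (Itl_posSemidef ny)
    (four_Itl_sub_Amat_posSemidef nx hnx)
  rw [kron3_sub_smul_right] at hpsd
  have h := aux_psd_quad_nonneg hpsd x
  rw [Matrix.sub_mulVec, Matrix.smul_mulVec, dotProduct_sub, dotProduct_smul] at h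
  simp only [smul_eq_mul] at h
  linarith

lemma kron3_y_le (hny : 0 < ny) (x : Node nx ny nz → ℝ) :
    x ⬝ᵥ kron3 (Itl nz) (Amat ny) (Itl nx) *ᵥ x
      ≤ 4 * (x ⬝ᵥ kron3 (Itl nz) (Itl ny) (Itl nx) *ᵥ x) := by
  have hpsd := kron3_posSemidef (Itl_posSemidef nz)
    (four_Itl_sub_Amat_posSemidef ny hny) (Itl_posSemidef nx)
  rw [kron3_sub_smul_mid] at hpsd
  have h := aux_psd_quad_nonneg hpsd x
  rw [Matrix.sub_mulVec, Matrix.smul_mulVec, dotProduct_sub, dotProduct_smul] at h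
  simp only [smul_eq_mul] at h
  linarith

lemma kron3_z_le (hnz : 0 < nz) (x : Node nx ny nz → ℝ) :
    x ⬝ᵥ kron3 (Amat nz) (Itl ny) (Itl nx) *ᵥ x
      ≤ 4 * (x ⬝ᵥ kron3 (Itl nz) (Itl ny) (Itl nx) *ᵥ x) := by
  have hpsd := kron3_posSemidef (four_Itl_sub_Amat_posSemidef nz hnz)
    (Itl_posSemidef ny) (Itl_posSemidef nx)
  rw [kron3_sub_smul_left] at hpsd
  have h := aux_psd_quad_nonneg hpsd x
  rw [Matrix.sub_mulVec, Matrix.smul_mulVec, dotProduct_sub, dotProduct_smul] at h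
  simp only [smul_eq_mul] at h
  linarith

lemma Hmat_isSymm (ℏ m Δx Δy Δz : ℝ) (U : Node nx ny nz → ℝ) :
    (Hmat nx ny nz ℏ m Δx Δy Δz U)ᵀ = Hmat nx ny nz ℏ m Δx Δy Δz U := by
  have hpot : Vsec nx ny nz Δx Δy Δz * Matrix.diagonal U
      = Matrix.diagonal (fun p =>
          (Δx * Δy * Δz * Itl nz p.1 p.1 * Itl ny p.2.1 p.2.1 * Itl nx p.2.2 p.2.2) * U p) := by
    rw [Vsec, Matrix.diagonal_mul_diagonal]
  rw [Hmat, hpot]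
  simp only [Matrix.transpose_add, Matrix.transpose_smul, kron3_transpose,
    Amat_transpose, Itl_transpose, Matrix.diagonal_transpose]

end Mid

section Cross

set_option linter.unusedSectionVars false

lemma Itl_diag_pos (q : ℕ) (k : Fin (q+1)) : 0 < Itl q k k := by
  simp only [Itl, Matrix.diagonal_apply_eq]
  split_ifs <;> norm_num

lemma Hmat_cross_bound (nx ny nz : ℕ) (hnx : 0 < nx) (hny : 0 < ny) (hnz : 0 < nz)
    (ℏ m Δx Δy Δz : ℝ) (hℏ : 0 < ℏ) (hm : 0 < m)
    (hΔx : 0 < Δx) (hΔy : 0 < Δy) (hΔz : 0 < Δz)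
    (U : Node nx ny nz → ℝ) (Umax : ℝ) (hU : ∀ p, |U p| ≤ Umax)
    (x y : Node nx ny nz → ℝ) :
    x ⬝ᵥ (Hmat nx ny nz ℏ m Δx Δy Δz U) *ᵥ y ≤
      (2*ℏ^2/m * (1/Δx^2 + 1/Δy^2 + 1/Δz^2) + Umax) *
        (Real.sqrt (x ⬝ᵥ Vsec nx ny nz Δx Δy Δz *ᵥ x) *
          Real.sqrt (y ⬝ᵥ Vsec nx ny nz Δx Δy Δz *ᵥ y)) := by
  have hUm0 : 0 ≤ Umax := le_trans (abs_nonneg _) (hU ⟨0, 0, 0⟩)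
  set V := Vsec nx ny nz Δx Δy Δz with hVdef
  set J := kron3 (Itl nz) (Itl ny) (Itl nx) with hJdef
  have hd : 0 < Δx*Δy*Δz := by positivity
  have hJpsd : J.PosSemidef :=
    kron3_posSemidef (Itl_posSemidef nz) (Itl_posSemidef ny) (Itl_posSemidef nx)
  have hVq : ∀ w : Node nx ny nz → ℝ, w ⬝ᵥ V *ᵥ w = (Δx*Δy*Δz) * (w ⬝ᵥ J *ᵥ w) := by
    intro w
    rw [hVdef, Vsec_eq_smul_kron3, Matrix.smul_mulVec, dotProduct_smul, smul_eq_mul]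
  have hsqrtV : ∀ w : Node nx ny nz → ℝ,
      Real.sqrt (w ⬝ᵥ V *ᵥ w) = Real.sqrt (Δx*Δy*Δz) * Real.sqrt (w ⬝ᵥ J *ᵥ w) := by
    intro w; rw [hVq, Real.sqrt_mul hd.le]
  set S := Real.sqrt (x ⬝ᵥ J *ᵥ x) * Real.sqrt (y ⬝ᵥ J *ᵥ y) with hSdef
  have hS0 : 0 ≤ S := mul_nonneg (Real.sqrt_nonneg _) (Real.sqrt_nonneg _)
  have hsqrt4 : Real.sqrt 4 = 2 := by
    rw [show (4:ℝ) = 2^2 by norm_num, Real.sqrt_sq (by norm_num : (0:ℝ) ≤ 2)]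
  -- generic bound for the three kinetic pieces
  have hM : ∀ (M : Matrix (Node nx ny nz) (Node nx ny nz) ℝ), M.PosSemidef →
      (∀ w, w ⬝ᵥ M *ᵥ w ≤ 4 * (w ⬝ᵥ J *ᵥ w)) → x ⬝ᵥ M *ᵥ y ≤ 4 * S := by
    intro M hpsd hle
    calc x ⬝ᵥ M *ᵥ y ≤ Real.sqrt (x ⬝ᵥ M *ᵥ x) * Real.sqrt (y ⬝ᵥ M *ᵥ y) := aux_psd_cs hpsd x y
      _ ≤ Real.sqrt (4 * (x ⬝ᵥ J *ᵥ x)) * Real.sqrt (4 * (y ⬝ᵥ J *ᵥ y)) :=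
          mul_le_mul (Real.sqrt_le_sqrt (hle x)) (Real.sqrt_le_sqrt (hle y))
            (Real.sqrt_nonneg _) (Real.sqrt_nonneg _)
      _ = 4 * S := by
          rw [Real.sqrt_mul (by norm_num : (0:ℝ) ≤ 4), Real.sqrt_mul (by norm_num : (0:ℝ) ≤ 4),
            hsqrt4, hSdef]; ring
  have h1 := hM _ (kron3_posSemidef (Itl_posSemidef nz) (Itl_posSemidef ny) (Amat_posSemidef nx))
    (kron3_x_le nx ny nz hnx)
  have h2 := hM _ (kron3_posSemidef (Itl_posSemidef nz) (Amat_posSemidef ny) (Itl_posSemidef nx))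
    (kron3_y_le nx ny nz hny)
  have h3 := hM _ (kron3_posSemidef (Amat_posSemidef nz) (Itl_posSemidef ny) (Itl_posSemidef nx))
    (kron3_z_le nx ny nz hnz)
  -- the potential part
  set f : Node nx ny nz → ℝ := fun p =>
    Δx * Δy * Δz * Itl nz p.1 p.1 * Itl ny p.2.1 p.2.1 * Itl nx p.2.2 p.2.2 with hfdef
  have hf0 : ∀ p, 0 ≤ f p := fun p => by
    have := Itl_diag_pos nz p.1; have := Itl_diag_pos ny p.2.1; have := Itl_diag_pos nx p.2.2
    simp only [hfdef]; positivity
  have hVqsum : ∀ w : Node nx ny nz → ℝ, w ⬝ᵥ V *ᵥ w = ∑ p, f p * w p ^ 2 := by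
    intro w
    simp only [hVdef, Vsec, dotProduct, mulVec_diagonal]
    exact Finset.sum_congr rfl fun p _ => by simp only [hfdef]; ring
  set u : Node nx ny nz → ℝ := fun p => Real.sqrt (f p) * |x p| with hudef
  set v : Node nx ny nz → ℝ := fun p => Real.sqrt (f p) * |y p| with hvdef
  have huu : u ⬝ᵥ u = x ⬝ᵥ V *ᵥ x := by
    rw [hVqsum]
    exact Finset.sum_congr rfl fun p _ => by
      simp only [hudef]
      rw [show Real.sqrt (f p) * |x p| * (Real.sqrt (f p) * |x p|)
        = Real.sqrt (f p) * Real.sqrt (f p) * (|x p| * |x p|) by ring,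
        Real.mul_self_sqrt (hf0 p), abs_mul_abs_self]
      ring
  have hvv : v ⬝ᵥ v = y ⬝ᵥ V *ᵥ y := by
    rw [hVqsum]
    exact Finset.sum_congr rfl fun p _ => by
      simp only [hvdef]
      rw [show Real.sqrt (f p) * |y p| * (Real.sqrt (f p) * |y p|)
        = Real.sqrt (f p) * Real.sqrt (f p) * (|y p| * |y p|) by ring,
        Real.mul_self_sqrt (hf0 p), abs_mul_abs_self]
      ring
  have hpot : x ⬝ᵥ (V * Matrix.diagonal U) *ᵥ y
      ≤ Umax * (Real.sqrt (x ⬝ᵥ V *ᵥ x) * Real.sqrt (y ⬝ᵥ V *ᵥ y)) := by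
    have hVU : V * Matrix.diagonal U = Matrix.diagonal (fun p => f p * U p) := by
      rw [hVdef, Vsec, Matrix.diagonal_mul_diagonal]
    have hstep : ∀ p, x p * (f p * U p * y p) ≤ Umax * (u p * v p) := by
      intro p
      have h3' : u p * v p = f p * (|x p| * |y p|) := by
        simp only [hudef, hvdef]
        rw [show Real.sqrt (f p) * |x p| * (Real.sqrt (f p) * |y p|)
            = Real.sqrt (f p) * Real.sqrt (f p) * (|x p| * |y p|) by ring,
          Real.mul_self_sqrt (hf0 p)]
      calc x p * (f p * U p * y p) ≤ |x p * (f p * U p * y p)| := le_abs_self _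
        _ = (f p * (|x p| * |y p|)) * |U p| := by
            rw [abs_mul, abs_mul, abs_mul, abs_of_nonneg (hf0 p)]; ring
        _ ≤ (f p * (|x p| * |y p|)) * Umax :=
            mul_le_mul_of_nonneg_left (hU p) (mul_nonneg (hf0 p) (by positivity))
        _ = Umax * (u p * v p) := by rw [h3']; ring
    calc x ⬝ᵥ (V * Matrix.diagonal U) *ᵥ y = ∑ p, x p * (f p * U p * y p) := by
          rw [hVU]; simp only [dotProduct, mulVec_diagonal]
      _ ≤ ∑ p, Umax * (u p * v p) := Finset.sum_le_sum fun p _ => hstep p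
      _ = Umax * (u ⬝ᵥ v) := by rw [← Finset.mul_sum]; rfl
      _ ≤ Umax * (Real.sqrt (u ⬝ᵥ u) * Real.sqrt (v ⬝ᵥ v)) :=
          mul_le_mul_of_nonneg_left (aux_dp_cs u v) hUm0
      _ = Umax * (Real.sqrt (x ⬝ᵥ V *ᵥ x) * Real.sqrt (y ⬝ᵥ V *ᵥ y)) := by rw [huu, hvv]
  -- assemble
  have hexp : x ⬝ᵥ (Hmat nx ny nz ℏ m Δx Δy Δz U) *ᵥ y
      = (ℏ^2/(2*m)) * ((Δy*Δz/Δx) * (x ⬝ᵥ kron3 (Itl nz) (Itl ny) (Amat nx) *ᵥ y)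
        + (Δx*Δz/Δy) * (x ⬝ᵥ kron3 (Itl nz) (Amat ny) (Itl nx) *ᵥ y)
        + (Δx*Δy/Δz) * (x ⬝ᵥ kron3 (Amat nz) (Itl ny) (Itl nx) *ᵥ y))
        + x ⬝ᵥ (V * Matrix.diagonal U) *ᵥ y := by
    simp only [Hmat, Matrix.add_mulVec, Matrix.smul_mulVec, dotProduct_add,
      dotProduct_smul, smul_eq_mul, hVdef]
  have hkin : (ℏ^2/(2*m)) * ((Δy*Δz/Δx) * (x ⬝ᵥ kron3 (Itl nz) (Itl ny) (Amat nx) *ᵥ y)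
        + (Δx*Δz/Δy) * (x ⬝ᵥ kron3 (Itl nz) (Amat ny) (Itl nx) *ᵥ y)
        + (Δx*Δy/Δz) * (x ⬝ᵥ kron3 (Amat nz) (Itl ny) (Itl nx) *ᵥ y))
      ≤ (2*ℏ^2/m * (1/Δx^2 + 1/Δy^2 + 1/Δz^2)) *
          (Real.sqrt (x ⬝ᵥ V *ᵥ x) * Real.sqrt (y ⬝ᵥ V *ᵥ y)) := by
    have hc1 : (0:ℝ) ≤ Δy*Δz/Δx := by positivity
    have hc2 : (0:ℝ) ≤ Δx*Δz/Δy := by positivity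
    have hc3 : (0:ℝ) ≤ Δx*Δy/Δz := by positivity
    have hsum : (Δy*Δz/Δx) * (x ⬝ᵥ kron3 (Itl nz) (Itl ny) (Amat nx) *ᵥ y)
        + (Δx*Δz/Δy) * (x ⬝ᵥ kron3 (Itl nz) (Amat ny) (Itl nx) *ᵥ y)
        + (Δx*Δy/Δz) * (x ⬝ᵥ kron3 (Amat nz) (Itl ny) (Itl nx) *ᵥ y)
        ≤ (Δy*Δz/Δx + Δx*Δz/Δy + Δx*Δy/Δz) * (4 * S) := by
      have b1 := mul_le_mul_of_nonneg_left h1 hc1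
      have b2 := mul_le_mul_of_nonneg_left h2 hc2
      have b3 := mul_le_mul_of_nonneg_left h3 hc3
      nlinarith [b1, b2, b3]
    have hVS : Real.sqrt (x ⬝ᵥ V *ᵥ x) * Real.sqrt (y ⬝ᵥ V *ᵥ y) = (Δx*Δy*Δz) * S := by
      rw [hsqrtV, hsqrtV, hSdef,
        show Real.sqrt (Δx*Δy*Δz) * Real.sqrt (x ⬝ᵥ J *ᵥ x)
            * (Real.sqrt (Δx*Δy*Δz) * Real.sqrt (y ⬝ᵥ J *ᵥ y))
          = Real.sqrt (Δx*Δy*Δz) * Real.sqrt (Δx*Δy*Δz)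
            * (Real.sqrt (x ⬝ᵥ J *ᵥ x) * Real.sqrt (y ⬝ᵥ J *ᵥ y)) by ring,
        Real.mul_self_sqrt hd.le]
    have hco : (ℏ^2/(2*m)) * ((Δy*Δz/Δx + Δx*Δz/Δy + Δx*Δy/Δz) * 4)
        = (2*ℏ^2/m * (1/Δx^2 + 1/Δy^2 + 1/Δz^2)) * (Δx*Δy*Δz) := by
      field_simp
      ring
    calc (ℏ^2/(2*m)) * ((Δy*Δz/Δx) * (x ⬝ᵥ kron3 (Itl nz) (Itl ny) (Amat nx) *ᵥ y)
        + (Δx*Δz/Δy) * (x ⬝ᵥ kron3 (Itl nz) (Amat ny) (Itl nx) *ᵥ y)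
        + (Δx*Δy/Δz) * (x ⬝ᵥ kron3 (Amat nz) (Itl ny) (Itl nx) *ᵥ y))
        ≤ (ℏ^2/(2*m)) * ((Δy*Δz/Δx + Δx*Δz/Δy + Δx*Δy/Δz) * (4 * S)) :=
          mul_le_mul_of_nonneg_left hsum (by positivity)
      _ = ((ℏ^2/(2*m)) * ((Δy*Δz/Δx + Δx*Δz/Δy + Δx*Δy/Δz) * 4)) * S := by ring
      _ = ((2*ℏ^2/m * (1/Δx^2 + 1/Δy^2 + 1/Δz^2)) * (Δx*Δy*Δz)) * S := by rw [hco]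
      _ = (2*ℏ^2/m * (1/Δx^2 + 1/Δy^2 + 1/Δz^2)) *
          (Real.sqrt (x ⬝ᵥ V *ᵥ x) * Real.sqrt (y ⬝ᵥ V *ᵥ y)) := by rw [hVS]; ring
  rw [hexp]
  have := add_le_add hkin hpot
  linarith [this]

end Cross

/-- Consequence of Theorem 2 and Lemma 1 of the paper: if the time step is below
the conventional CFL limit, then the FDTD-Q probability matrix `𝒫` is positive
definite. -/
theorem fdtdq_conventional_CFL_implies_posdef
    (nx ny nz : ℕ) (hnx : 0 < nx) (hny : 0 < ny) (hnz : 0 < nz)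
    (ℏ m Δx Δy Δz : ℝ) (hℏ : 0 < ℏ) (hm : 0 < m)
    (hΔx : 0 < Δx) (hΔy : 0 < Δy) (hΔz : 0 < Δz)
    (U : Node nx ny nz → ℝ)
    (Δt : ℝ) (hΔt : 0 < Δt)
    (hCFL : Δt < 2 / ((2*ℏ/m) * (1/Δx^2 + 1/Δy^2 + 1/Δz^2)
        + (1/ℏ) * (Finset.univ.sup' Finset.univ_nonempty
            (fun p : Node nx ny nz => |U p|)))) :
    (Matrix.fromBlocks (Vsec nx ny nz Δx Δy Δz)
      (-(Δt/(2*ℏ)) • Hmat nx ny nz ℏ m Δx Δy Δz U)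
      (-(Δt/(2*ℏ)) • Hmat nx ny nz ℏ m Δx Δy Δz U)
      (Vsec nx ny nz Δx Δy Δz)).PosDef := by
  set Umax : ℝ := Finset.univ.sup' Finset.univ_nonempty (fun p : Node nx ny nz => |U p|)
    with hUmaxdef
  have hU : ∀ p : Node nx ny nz, |U p| ≤ Umax :=
    fun p => Finset.le_sup' (fun p : Node nx ny nz => |U p|) (Finset.mem_univ p)
  have hUm0 : 0 ≤ Umax := le_trans (abs_nonneg _) (hU ⟨0, 0, 0⟩)
  set c : ℝ := (2*ℏ/m) * (1/Δx^2 + 1/Δy^2 + 1/Δz^2) + (1/ℏ) * Umax with hcdef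
  have hc0 : 0 < c := by
    have h1 : 0 < (2*ℏ/m) * (1/Δx^2 + 1/Δy^2 + 1/Δz^2) := by positivity
    have h2 : 0 ≤ (1/ℏ) * Umax := by positivity
    rw [hcdef]; linarith
  have hΔtc : Δt * c < 2 := by
    rw [lt_div_iff₀ hc0] at hCFL
    linarith
  have hℏc : 2*ℏ^2/m * (1/Δx^2+1/Δy^2+1/Δz^2) + Umax = ℏ * c := by
    rw [hcdef]
    field_simp
  -- diagonal entries of V''
  set f : Node nx ny nz → ℝ := fun p =>
    Δx * Δy * Δz * Itl nz p.1 p.1 * Itl ny p.2.1 p.2.1 * Itl nx p.2.2 p.2.2 with hfdef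
  have hfpos : ∀ p, 0 < f p := fun p => by
    have := Itl_diag_pos nz p.1; have := Itl_diag_pos ny p.2.1; have := Itl_diag_pos nx p.2.2
    simp only [hfdef]; positivity
  have hVq : ∀ w : Node nx ny nz → ℝ,
      w ⬝ᵥ Vsec nx ny nz Δx Δy Δz *ᵥ w = ∑ p, f p * w p ^ 2 := by
    intro w
    simp only [Vsec, dotProduct, mulVec_diagonal]
    exact Finset.sum_congr rfl fun p _ => by simp only [hfdef]; ring
  have hVnn : ∀ w : Node nx ny nz → ℝ, 0 ≤ w ⬝ᵥ Vsec nx ny nz Δx Δy Δz *ᵥ w := by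
    intro w
    rw [hVq]
    exact Finset.sum_nonneg fun p _ => mul_nonneg (hfpos p).le (sq_nonneg _)
  have hVpos : ∀ w : Node nx ny nz → ℝ, w ≠ 0 →
      0 < w ⬝ᵥ Vsec nx ny nz Δx Δy Δz *ᵥ w := by
    intro w hw
    obtain ⟨p, hp⟩ := Function.ne_iff.mp hw
    rw [hVq]
    exact Finset.sum_pos' (fun q _ => mul_nonneg (hfpos q).le (sq_nonneg _))
      ⟨p, Finset.mem_univ p, mul_pos (hfpos p) (by exact pow_pos (abs_pos.mpr hp) 2 |>.trans_eq (sq_abs _))⟩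
  refine Matrix.PosDef.of_dotProduct_mulVec_pos ?_ ?_
  · -- Hermitian
    have hHt := Hmat_isSymm nx ny nz ℏ m Δx Δy Δz U
    have hVt : (Vsec nx ny nz Δx Δy Δz)ᵀ = Vsec nx ny nz Δx Δy Δz :=
      Matrix.diagonal_transpose _
    show _ᴴ = _
    rw [Matrix.conjTranspose_eq_transpose_of_trivial, Matrix.fromBlocks_transpose]
    simp only [Matrix.transpose_smul, hHt, hVt]
  · intro z hz
    set x : Node nx ny nz → ℝ := fun i => z (Sum.inl i) with hxdef
    set y : Node nx ny nz → ℝ := fun i => z (Sum.inr i) with hydef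
    have hzel : z = Sum.elim x y := by funext i; cases i <;> rfl
    have hstar : star z = z := funext fun i => star_trivial _
    rw [hstar, hzel, Matrix.fromBlocks_mulVec, sumElim_dotProduct_sumElim]
    set a := x ⬝ᵥ Vsec nx ny nz Δx Δy Δz *ᵥ x with hadef
    set b := y ⬝ᵥ Vsec nx ny nz Δx Δy Δz *ᵥ y with hbdef
    have hxy := Hmat_cross_bound nx ny nz hnx hny hnz ℏ m Δx Δy Δz hℏ hm hΔx hΔy hΔz U Umax hU x y
    have hyx := Hmat_cross_bound nx ny nz hnx hny hnz ℏ m Δx Δy Δz hℏ hm hΔx hΔy hΔz U Umax hU y x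
    rw [hℏc] at hxy hyx
    set sa := Real.sqrt a with hsadef
    set sb := Real.sqrt b with hsbdef
    have hsa0 : 0 ≤ sa := Real.sqrt_nonneg _
    have hsb0 : 0 ≤ sb := Real.sqrt_nonneg _
    have hsa2 : sa ^ 2 = a := Real.sq_sqrt (hVnn x)
    have hsb2 : sb ^ 2 = b := Real.sq_sqrt (hVnn y)
    -- a + b > 0
    have hab : 0 < a + b := by
      have hxyne : x ≠ 0 ∨ y ≠ 0 := by
        by_contra h
        push_neg at h
        apply hz
        funext i
        cases i with
        | inl i => exact congrFun h.1 i
        | inr i => exact congrFun h.2 i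
      rcases hxyne with h | h
      · have := hVpos x h; have := hVnn y; rw [← hadef] at *; linarith [hVpos x h, hVnn y]
      · linarith [hVpos y h, hVnn x]
    -- expand goal
    simp only [Sum.elim_comp_inl, Sum.elim_comp_inr, dotProduct_add, Matrix.smul_mulVec,
      dotProduct_smul, smul_eq_mul, neg_mul, ← hadef, ← hbdef]
    have hs : 0 < Δt/(2*ℏ) := by positivity
    have b1 : (Δt/(2*ℏ)) * (x ⬝ᵥ Hmat nx ny nz ℏ m Δx Δy Δz U *ᵥ y)
        ≤ (Δt/(2*ℏ)) * (ℏ * c * (sa * sb)) := mul_le_mul_of_nonneg_left hxy hs.le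
    have b2 : (Δt/(2*ℏ)) * (y ⬝ᵥ Hmat nx ny nz ℏ m Δx Δy Δz U *ᵥ x)
        ≤ (Δt/(2*ℏ)) * (ℏ * c * (sb * sa)) := mul_le_mul_of_nonneg_left hyx hs.le
    have hrr : (Δt/(2*ℏ)) * (ℏ * c) = Δt * c / 2 := by
      field_simp
    have key : 0 < sa ^ 2 + sb ^ 2 - (Δt * c) * (sa * sb) := by
      by_cases hprod : sa * sb = 0
      · rw [hprod]
        rw [hsa2, hsb2]
        simpa using hab
      · have hp : 0 < sa * sb := lt_of_le_of_ne (mul_nonneg hsa0 hsb0) (Ne.symm hprod)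
        have e : sa ^ 2 + sb ^ 2 - (Δt * c) * (sa * sb)
            = (sa - sb) ^ 2 + (2 - Δt * c) * (sa * sb) := by ring
        rw [e]
        exact add_pos_of_nonneg_of_pos (sq_nonneg _) (mul_pos (by linarith) hp)
    rw [hsa2, hsb2] at key
    have b1' : (Δt/(2*ℏ)) * (x ⬝ᵥ Hmat nx ny nz ℏ m Δx Δy Δz U *ᵥ y)
        ≤ (Δt * c / 2) * (sa * sb) := by
      calc (Δt/(2*ℏ)) * (x ⬝ᵥ Hmat nx ny nz ℏ m Δx Δy Δz U *ᵥ y)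
          ≤ (Δt/(2*ℏ)) * (ℏ * c * (sa * sb)) := b1
        _ = ((Δt/(2*ℏ)) * (ℏ * c)) * (sa * sb) := by ring
        _ = (Δt * c / 2) * (sa * sb) := by rw [hrr]
    have b2' : (Δt/(2*ℏ)) * (y ⬝ᵥ Hmat nx ny nz ℏ m Δx Δy Δz U *ᵥ x)
        ≤ (Δt * c / 2) * (sa * sb) := by
      calc (Δt/(2*ℏ)) * (y ⬝ᵥ Hmat nx ny nz ℏ m Δx Δy Δz U *ᵥ x)
          ≤ (Δt/(2*ℏ)) * (ℏ * c * (sb * sa)) := b2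
        _ = ((Δt/(2*ℏ)) * (ℏ * c)) * (sa * sb) := by ring
        _ = (Δt * c / 2) * (sa * sb) := by rw [hrr]
    clear_value sa sb a b c Umax
    linarith [b1', b2', key]

end
end
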